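/- Potential shaping shifts trajectory returns by a trajectory-independent amount determined by the first state: for any infinite trajectory (s₀,a₀,s₁,a₁,...) and γ ∈ [0,1), the discounted return under R'(s,a,s') = R(s,a,s') + γΦ(s') − Φ(s) equals the return under R minus Φ(s₀); i.e., Σ_{t≥0} γ^t R'(s_t,a_t,s_{t+1}) = Σ_{t≥0} γ^t R(s_t,a_t,s_{t+1}) − Φ(s₀). -/

import Mathlib

lemma summable_geom_bounded (γ : ℝ) (hγ0 : 0 ≤ γ) (hγ1 : γ < 1)
    (x : ℕ → ℝ) (M : ℝ) (hM : ∀ t, |x t| ≤ M) :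
    Summable (fun t : ℕ => γ ^ t * x t) := by
  have hgeo : Summable (fun t : ℕ => γ ^ t * M) :=
    (summable_geometric_of_lt_one hγ0 hγ1).mul_right M
  refine Summable.of_norm_bounded hgeo ?_
  intro t
  have h1 : ‖γ ^ t * x t‖ = γ ^ t * |x t| := by
    rw [norm_mul, Real.norm_eq_abs, Real.norm_eq_abs, abs_of_nonneg (pow_nonneg hγ0 t)]
  rw [h1]
  exact mul_le_mul_of_nonneg_left (hM t) (pow_nonneg hγ0 t)

/-- Potential shaping shifts trajectory returns by Φ(s₀): for any
infinite trajectory (s₀,a₀,s₁,a₁,...) and γ ∈ [0,1), the discounted return under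
R'(s,a,s') = R(s,a,s') + γΦ(s') − Φ(s) equals the return under R minus Φ(s₀). -/
theorem shaping_shifts_returns {S A : Type*}
    (γ : ℝ) (hγ0 : 0 ≤ γ) (hγ1 : γ < 1)
    (R : S → A → S → ℝ) (hRb : ∃ M, ∀ s a s', |R s a s'| ≤ M)
    (Φ : S → ℝ) (hΦb : ∃ M, ∀ s, |Φ s| ≤ M)
    (R' : S → A → S → ℝ)
    (hR' : ∀ s a s', R' s a s' = R s a s' + γ * Φ s' - Φ s)
    (s : ℕ → S) (a : ℕ → A) :
    ∑' t : ℕ, γ ^ t * R' (s t) (a t) (s (t + 1))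
      = (∑' t : ℕ, γ ^ t * R (s t) (a t) (s (t + 1))) - Φ (s 0) := by
  obtain ⟨MR, hMR⟩ := hRb
  obtain ⟨MΦ, hMΦ⟩ := hΦb
  set f : ℕ → ℝ := fun t => γ ^ t * R (s t) (a t) (s (t + 1)) with hf
  set g : ℕ → ℝ := fun t => γ ^ t * Φ (s t) with hg
  have hfs : Summable f := summable_geom_bounded γ hγ0 hγ1 _ MR (fun t => hMR _ _ _)
  have hgs : Summable g := summable_geom_bounded γ hγ0 hγ1 _ MΦ (fun t => hMΦ _)
  have hgs' : Summable (fun t => g (t + 1)) := by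
    have := (summable_nat_add_iff 1).2 hgs
    simpa using this
  have key : ∀ t : ℕ, γ ^ t * R' (s t) (a t) (s (t + 1)) = f t + (g (t + 1) - g t) := by
    intro t
    simp only [hf, hg, hR', pow_succ]
    ring
  have hgt : ∑' t : ℕ, (g (t + 1) - g t) = -g 0 := by
    have h0 : ∑' t : ℕ, g t = g 0 + ∑' t : ℕ, g (t + 1) := hgs.tsum_eq_zero_add
    rw [hgs'.tsum_sub hgs]
    linarith
  calc ∑' t : ℕ, γ ^ t * R' (s t) (a t) (s (t + 1))
      = ∑' t : ℕ, (f t + (g (t + 1) - g t)) := by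
        exact tsum_congr key
    _ = (∑' t : ℕ, f t) + ∑' t : ℕ, (g (t + 1) - g t) :=
        hfs.tsum_add (hgs'.sub hgs)
    _ = (∑' t : ℕ, f t) - Φ (s 0) := by
        rw [hgt]; simp [hg, sub_eq_add_neg]
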